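/- For a Weyl group W with parabolic subgroup W_P, if w ∈ W^P (the set of minimal-length coset representatives of W/W_P), then for any u ∈ W, u ≤_P w if and only if u ≤ w in the Bruhat order. -/

import Mathlib

open CoxeterSystem List

namespace ExtPAux

attribute [local instance] Classical.propDecidable

variable {B W : Type*} [Group W] {M : CoxeterMatrix B} (cs : CoxeterSystem M W)

local prefix:100 "σ" => cs.simple
local prefix:100 "π" => cs.wordProd
local prefix:100 "ℓ" => cs.length

noncomputable def sgn (i : B) : Equiv.Perm (W × ℤˣ) :=
  Function.Involutive.toPerm
    (fun p => (σ i * p.1 * σ i, p.2 * (if p.1 = σ i then -1 else 1)))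
    (by
      intro p
      obtain ⟨t, e⟩ := p
      simp only [Prod.mk.injEq]
      have h : (σ i * t * σ i = σ i) ↔ (t = σ i) := by
        constructor
        · intro h
          have := congrArg (fun x => σ i * x * σ i) h
          simpa [← mul_assoc, cs.simple_mul_simple_self,
            cs.simple_mul_simple_cancel_left, cs.simple_mul_simple_cancel_right] using this
        · intro h; rw [h]; rw [cs.simple_mul_simple_self]; exact one_mul _
      constructor
      · calc σ i * (σ i * t * σ i) * σ i
            = (σ i * σ i) * t * (σ i * σ i) := by group
          _ = t := by rw [cs.simple_mul_simple_self]; group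
      · by_cases ht : t = σ i
        · simp [ht, h]
        · simp [ht, h])

lemma sgn_apply (i : B) (t : W) (e : ℤˣ) :
    sgn cs i (t, e) = (σ i * t * σ i, e * (if t = σ i then -1 else 1)) := rfl

/-- One step of the dihedral pair. -/
lemma sgn_mul_apply (i j : B) (t : W) (e : ℤˣ) :
    (sgn cs i * sgn cs j) (t, e) =
      ((σ i * σ j) * t * (σ i * σ j)⁻¹,
        e * ((if t = σ j then -1 else 1) * (if t = σ j * σ i * σ j then -1 else 1))) := by
  rw [Equiv.Perm.mul_apply, sgn_apply, sgn_apply]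
  simp only [Prod.mk.injEq]
  constructor
  · rw [mul_inv_rev, cs.inv_simple, cs.inv_simple]; group
  · have hiff : (σ j * t * σ j = σ i) ↔ (t = σ j * σ i * σ j) := by
      constructor
      · intro h
        have := congrArg (fun x => σ j * x * σ j) h
        calc t = (σ j * σ j) * t * (σ j * σ j) := by rw [cs.simple_mul_simple_self]; group
          _ = σ j * (σ j * t * σ j) * σ j := by group
          _ = σ j * σ i * σ j := by rw [h]
      · intro h; rw [h]
        calc σ j * (σ j * σ i * σ j) * σ j = (σ j * σ j) * σ i * (σ j * σ j) := by group
          _ = σ i := by rw [cs.simple_mul_simple_self]; group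
    by_cases hc : σ j * t * σ j = σ i
    · rw [if_pos hc, if_pos (hiff.mp hc), mul_assoc]
    · rw [if_neg hc, if_neg (fun h => hc (hiff.mpr h)), mul_assoc]

lemma sgn_mul_pow_apply (i j : B) (k : ℕ) (t : W) (e : ℤˣ) :
    ((sgn cs i * sgn cs j) ^ k) (t, e) =
      ((σ i * σ j) ^ k * t * ((σ i * σ j) ^ k)⁻¹,
        e * ∏ d ∈ Finset.range k,
          ((if (σ i * σ j) ^ d * t * ((σ i * σ j) ^ d)⁻¹ = σ j then (-1 : ℤˣ) else 1) *
           (if (σ i * σ j) ^ d * t * ((σ i * σ j) ^ d)⁻¹ = σ j * σ i * σ j then -1 else 1))) := by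
  induction k generalizing e with
  | zero => simp
  | succ k ih =>
      rw [pow_succ' (sgn cs i * sgn cs j) k, Equiv.Perm.mul_apply, ih, sgn_mul_apply]
      simp only [Prod.mk.injEq]
      set g := σ i * σ j with hg
      constructor
      · group
      · rw [Finset.prod_range_succ, mul_assoc]

lemma isLiftable_sgn : M.IsLiftable (sgn cs) := by
  intro i j
  apply Equiv.ext
  rintro ⟨t, e⟩
  rw [sgn_mul_pow_apply]
  set m := M i j with hm
  set a := σ i with ha
  set g := σ i * σ j with hg
  have hgm : g ^ m = 1 := cs.simple_mul_simple_pow i j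
  have haa : a * a = 1 := cs.simple_mul_simple_self i
  have hj : σ j = a * g := by rw [ha, hg, ← mul_assoc, haa, one_mul]
  have haga : a * g * a = g⁻¹ := by
    rw [← hj, hg, mul_inv_rev, cs.inv_simple, cs.inv_simple, ← ha]
  have hconj : ∀ d : ℕ, a * g ^ d * a = (g ^ d)⁻¹ := by
    intro d
    have h1 : a * g ^ d * a⁻¹ = (a * g * a⁻¹) ^ d := by rw [conj_pow]
    have ha' : a⁻¹ = a := cs.inv_simple i
    rw [ha'] at h1
    rw [h1, haga, inv_pow]
  have hinva : ∀ d : ℕ, (g ^ d)⁻¹ * a = a * g ^ d := by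
    intro d
    rw [← hconj d, mul_assoc, haa, mul_one]
  have hinva1 : g⁻¹ * a = a * g := by rw [← haga, mul_assoc, haa, mul_one]
  have hji : σ j * σ i * σ j = a * g ^ 2 := by
    have h1 : σ j * σ i * σ j = a * g * a * (a * g) := by rw [hj, ← ha]
    rw [h1, haga, ← mul_assoc, hinva1, pow_two, mul_assoc]
  have hconj_iff : ∀ (y : W) (d : ℕ),
      (g ^ d * t * (g ^ d)⁻¹ = y) ↔ (t = (g ^ d)⁻¹ * y * g ^ d) := by
    intro y d
    constructor
    · intro h; rw [← h]; group
    · intro h; rw [h]; group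
  have hvalj : ∀ d : ℕ, (g ^ d)⁻¹ * σ j * g ^ d = a * g ^ (2*d+1) := by
    intro d
    rw [hj, ← mul_assoc, hinva d, mul_assoc, mul_assoc, ← pow_succ',
      ← pow_add, show d + (d + 1) = 2*d+1 by ring]
  have hvalji : ∀ d : ℕ, (g ^ d)⁻¹ * (σ j * σ i * σ j) * g ^ d = a * g ^ (2*d+2) := by
    intro d
    rw [hji, ← mul_assoc, hinva d, mul_assoc, ← pow_add, mul_assoc, ← pow_add,
      show d + (2 + d) = 2*d+2 by ring]
  set F : ℕ → ℤˣ := fun e => if t = a * g ^ e then -1 else 1 with hF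
  have hfact : ∀ d : ℕ,
      ((if g ^ d * t * (g ^ d)⁻¹ = σ j then (-1:ℤˣ) else 1) *
       (if g ^ d * t * (g ^ d)⁻¹ = σ j * σ i * σ j then -1 else 1))
      = F (2*d+1) * F (2*d+2) := by
    intro d
    have e1 : (g ^ d * t * (g ^ d)⁻¹ = σ j) ↔ (t = a * g ^ (2*d+1)) := by
      rw [hconj_iff (σ j) d, hvalj d]
    have e2 : (g ^ d * t * (g ^ d)⁻¹ = σ j * σ i * σ j) ↔ (t = a * g ^ (2*d+2)) := by
      rw [hconj_iff _ d, hvalji d]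
    rw [if_congr e1 rfl rfl, if_congr e2 rfl rfl]
  have claimA : ∀ n : ℕ,
      (∏ d ∈ Finset.range n, (F (2*d+1) * F (2*d+2)))
        = ∏ e ∈ Finset.range (2*n), F (e+1) := by
    intro n
    induction n with
    | zero => simp
    | succ n ih =>
        rw [Finset.prod_range_succ, ih,
          show 2*(n+1) = (2*n+1)+1 by ring,
          Finset.prod_range_succ, Finset.prod_range_succ,
          show 2*n+1+1 = 2*n+2 by ring, mul_assoc]
  have claimC : ∀ e : ℕ, F (m + (e + 1)) = F (e + 1) := by
    intro e
    have hgg : g ^ (m + (e+1)) = g ^ (e+1) := by rw [pow_add, hgm, one_mul]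
    simp only [hF, hgg]
  have hprod : (∏ d ∈ Finset.range m,
      ((if g ^ d * t * (g ^ d)⁻¹ = σ j then (-1:ℤˣ) else 1) *
       (if g ^ d * t * (g ^ d)⁻¹ = σ j * σ i * σ j then -1 else 1))) = 1 := by
    rw [Finset.prod_congr rfl (fun d _ => hfact d), claimA m, two_mul,
      Finset.prod_range_add]
    have : (∏ e ∈ Finset.range m, F (m + e + 1)) = ∏ e ∈ Finset.range m, F (e + 1) :=
      Finset.prod_congr rfl (fun e _ => by rw [show m + e + 1 = m + (e+1) by ring, claimC e])
    rw [this, Int.units_mul_self]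
  rw [hprod, hgm, Equiv.Perm.one_apply]
  simp

lemma prod_sgn_apply (ω : List B) (t : W) (e : ℤˣ) :
    (ω.map (sgn cs)).prod (t, e) =
      (π ω * t * (π ω)⁻¹,
        e * ((cs.rightInvSeq ω).map (fun x => if x = t then (-1 : ℤˣ) else 1)).prod) := by
  induction ω generalizing e with
  | nil => simp
  | cons i ω ih =>
      rw [List.map_cons, List.prod_cons, Equiv.Perm.mul_apply, ih, sgn_apply]
      have hris : cs.rightInvSeq (i :: ω) =
          ((π ω)⁻¹ * (σ i) * (π ω)) :: cs.rightInvSeq ω := rfl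
      rw [hris, List.map_cons, List.prod_cons]
      simp only [Prod.mk.injEq]
      constructor
      · rw [cs.wordProd_cons]
        rw [mul_inv_rev, cs.inv_simple]
        group
      · have hiff : ((π ω)⁻¹ * σ i * π ω = t) ↔ (π ω * t * (π ω)⁻¹ = σ i) := by
          constructor
          · intro h; rw [← h]; group
          · intro h; rw [← h]; group
        by_cases hc : π ω * t * (π ω)⁻¹ = σ i
        · rw [if_pos hc, if_pos (hiff.mpr hc)]
          rw [mul_assoc, mul_comm ((cs.rightInvSeq ω).map _).prod (-1)]
        · rw [if_neg hc, if_neg (fun h => hc (hiff.mp h))]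
          rw [mul_assoc, mul_comm ((cs.rightInvSeq ω).map _).prod 1]

/-- The sign representation homomorphism `W →* Perm (W × ℤˣ)`. -/
noncomputable def phi : W →* Equiv.Perm (W × ℤˣ) :=
  cs.lift ⟨sgn cs, isLiftable_sgn cs⟩

lemma phi_simple (i : B) : phi cs (σ i) = sgn cs i :=
  cs.lift_apply_simple (isLiftable_sgn cs) i

lemma phi_wordProd (ω : List B) : phi cs (π ω) = (ω.map (sgn cs)).prod := by
  induction ω with
  | nil => simp [cs.wordProd_nil]
  | cons i ω ih => rw [cs.wordProd_cons, map_mul, phi_simple, List.map_cons, List.prod_cons, ih]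

/-- The sign of the reflection cocycle. -/
noncomputable def refSign (w t : W) : ℤˣ := ((phi cs w) (t, 1)).2

lemma refSign_eq_prod (ω : List B) (t : W) :
    refSign cs (π ω) t
      = ((cs.rightInvSeq ω).map (fun x => if x = t then (-1 : ℤˣ) else 1)).prod := by
  rw [refSign, phi_wordProd, prod_sgn_apply, one_mul]

lemma phi_apply (w t : W) (e : ℤˣ) :
    (phi cs w) (t, e) = (w * t * w⁻¹, e * refSign cs w t) := by
  obtain ⟨ω, rfl⟩ := cs.wordProd_surjective w
  rw [phi_wordProd, prod_sgn_apply, refSign_eq_prod]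

lemma mem_rightInvSeq_of_refSign {w t : W} (h : refSign cs w t = -1)
    {ω : List B} (hω : π ω = w) : t ∈ cs.rightInvSeq ω := by
  by_contra hmem
  rw [← hω, refSign_eq_prod] at h
  have : ((cs.rightInvSeq ω).map (fun x => if x = t then (-1 : ℤˣ) else 1)).prod = 1 := by
    apply List.prod_eq_one
    intro x hx
    obtain ⟨y, hy, rfl⟩ := List.mem_map.mp hx
    rw [if_neg]
    intro hyt
    exact hmem (hyt ▸ hy)
  rw [this] at h
  exact absurd h (by decide)

lemma refSign_refl_self {t : W} (ht : cs.IsReflection t) : (phi cs t) (t, 1) = (t, -1) := by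
  obtain ⟨u, i, rfl⟩ := ht
  set t := u * σ i * u⁻¹ with hti
  have h1 : (phi cs u⁻¹) (t, 1) = (σ i, refSign cs u⁻¹ t) := by
    rw [phi_apply]
    congr 1
    rw [hti]
    group
  have h2 : (phi cs u) (σ i, refSign cs u⁻¹ t) = (t, 1) := by
    have := congrArg (phi cs u) h1
    rw [← Equiv.Perm.mul_apply, ← map_mul, mul_inv_cancel, map_one,
      Equiv.Perm.one_apply] at this
    rw [← this]
  have h3 : (phi cs u) (σ i, -(refSign cs u⁻¹ t)) = (t, -1) := by
    rw [phi_apply] at h2 ⊢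
    rw [Prod.mk.injEq] at h2
    rw [Prod.mk.injEq]
    refine ⟨h2.1, ?_⟩
    rw [neg_mul, h2.2]
  calc (phi cs t) (t, 1) = (phi cs u * phi cs (σ i) * phi cs u⁻¹) (t, 1) := by
        rw [← map_mul, ← map_mul]
    _ = (phi cs u) ((phi cs (σ i)) ((phi cs u⁻¹) (t, 1))) := by
        rw [Equiv.Perm.mul_apply, Equiv.Perm.mul_apply]
    _ = (t, -1) := by
        rw [h1, phi_simple, sgn_apply, if_pos rfl, cs.simple_mul_simple_cancel_right,
          mul_neg_one, ← h3]

lemma refSign_mul_refl {t : W} (ht : cs.IsReflection t) (w : W) :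
    refSign cs (w * t) t = -(refSign cs w t) := by
  have : (phi cs (w * t)) (t, 1) = (phi cs w) ((phi cs t) (t, 1)) := by
    rw [map_mul, Equiv.Perm.mul_apply]
  rw [refSign, this, refSign_refl_self cs ht, phi_apply]
  simp

/-- **Strong exchange**. -/
theorem strong_exchange [Finite W] {w t : W} (ht : cs.IsReflection t)
    (hlt : ℓ (w * t) < ℓ w) {ω : List B} (hω : π ω = w) : t ∈ cs.rightInvSeq ω := by
  have : Fintype W := Fintype.ofFinite W
  apply mem_rightInvSeq_of_refSign cs (h := ?_) hω
  -- counting argument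
  set A : Finset W := Finset.univ.filter (fun v => refSign cs v t = -1) with hA
  set Bf : Finset W := Finset.univ.filter (fun v => ℓ (v * t) < ℓ v) with hB
  have hsub : A ⊆ Bf := by
    intro v hv
    rw [hA, Finset.mem_filter] at hv
    obtain ⟨ωv, hred, hveq⟩ := cs.exists_reduced_word' v
    have hmem : t ∈ cs.rightInvSeq ωv := mem_rightInvSeq_of_refSign cs hv.2 hveq.symm
    have hinv := cs.isRightInversion_of_mem_rightInvSeq hred hmem
    rw [hB, Finset.mem_filter]
    exact ⟨Finset.mem_univ v, by rw [hveq]; exact hinv.2⟩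
  have cardA : A.card + A.card = Fintype.card W := by
    have hbij : A.card = (Finset.univ.filter (fun v => ¬(refSign cs v t = -1))).card := by
      apply Finset.card_bij' (fun v _ => v * t) (fun v _ => v * t)
      · intro v hv
        rw [Finset.mem_filter] at hv ⊢
        refine ⟨Finset.mem_univ _, ?_⟩
        rw [refSign_mul_refl cs ht, hv.2]
        decide
      · intro v hv
        rw [Finset.mem_filter] at hv ⊢
        refine ⟨Finset.mem_univ _, ?_⟩
        rcases Int.units_eq_one_or (refSign cs v t) with h | h
        · rw [refSign_mul_refl cs ht, h]
        · exact absurd h hv.2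
      · intro v _; rw [mul_assoc, ht.mul_self, mul_one]
      · intro v _; rw [mul_assoc, ht.mul_self, mul_one]
    have h2 := Finset.card_filter_add_card_filter_not
      (s := (Finset.univ : Finset W)) (p := fun v => refSign cs v t = -1)
    rw [Finset.card_univ] at h2
    rw [hA] at hbij
    rw [hA]
    omega
  have cardB : Bf.card + Bf.card = Fintype.card W := by
    have hbij : Bf.card = (Finset.univ.filter (fun v => ¬(ℓ (v * t) < ℓ v))).card := by
      apply Finset.card_bij' (fun v _ => v * t) (fun v _ => v * t)
      · intro v hv
        rw [Finset.mem_filter] at hv ⊢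
        refine ⟨Finset.mem_univ _, ?_⟩
        rw [mul_assoc, ht.mul_self, mul_one]
        omega
      · intro v hv
        rw [Finset.mem_filter] at hv ⊢
        refine ⟨Finset.mem_univ _, ?_⟩
        have hne := ht.length_mul_left_ne v
        rw [mul_assoc, ht.mul_self, mul_one]
        omega
      · intro v _; rw [mul_assoc, ht.mul_self, mul_one]
      · intro v _; rw [mul_assoc, ht.mul_self, mul_one]
    have h2 := Finset.card_filter_add_card_filter_not
      (s := (Finset.univ : Finset W)) (p := fun v => ℓ (v * t) < ℓ v)
    rw [Finset.card_univ] at h2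
    rw [hB] at hbij
    rw [hB]
    omega
  have hAB : A = Bf := by
    apply Finset.eq_of_subset_of_card_le hsub
    omega
  have hwB : w ∈ Bf := by
    rw [hB, Finset.mem_filter]
    exact ⟨Finset.mem_univ _, hlt⟩
  rw [← hAB, hA, Finset.mem_filter] at hwB
  exact hwB.2

theorem exchange_eraseIdx [Finite W] {w t : W} (ht : cs.IsReflection t)
    (hlt : ℓ (w * t) < ℓ w) {ω : List B} (hω : π ω = w) :
    ∃ j < ω.length, w * t = π (ω.eraseIdx j) := by
  obtain ⟨j, hj, hget⟩ := List.mem_iff_getElem.mp (strong_exchange cs ht hlt hω)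
  rw [cs.length_rightInvSeq] at hj
  refine ⟨j, hj, ?_⟩
  have hgetD : (cs.rightInvSeq ω).getD j 1 = t := by
    rw [List.getD_eq_getElem _ 1 (by rwa [cs.length_rightInvSeq])]
    exact hget
  rw [← cs.wordProd_mul_getD_rightInvSeq ω j, hω, hgetD]

end ExtPAux




/-!
STATEMENT 1: For a Weyl group `W` (formalized as a finite Coxeter group) with parabolic
subgroup `W_P`, if `w ∈ W^P` (minimal-length coset representatives of `W/W_P`), then for any
`u ∈ W`: `u ≤_P w ↔ u ≤ w` in the Bruhat order.
-/

open CoxeterSystem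

variable {B W : Type*} [Group W]

/-- The parabolic subgroup `W_P` generated by the simple reflections indexed by `J`. -/
def parabolicSubgroup {M : CoxeterMatrix B} (cs : CoxeterSystem M W) (J : Set B) : Subgroup W :=
  Subgroup.closure (cs.simple '' J)

/-- One step of the extended `P`-Bruhat order: right multiplication by a reflection `s_α`
with `α ∈ R⁺ \ R_P⁺` (i.e. a reflection of `W` not lying in `W_P`) that increases length. -/
def extPStep {M : CoxeterMatrix B} (cs : CoxeterSystem M W) (J : Set B) (u w : W) : Prop :=
  ∃ t : W, cs.IsReflection t ∧ t ∉ parabolicSubgroup cs J ∧ w = u * t ∧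
    cs.length u < cs.length w

/-- The extended `P`-Bruhat order `≤_P`. -/
def extPLE {M : CoxeterMatrix B} (cs : CoxeterSystem M W) (J : Set B) : W → W → Prop :=
  Relation.ReflTransGen (extPStep cs J)

/-- The ordinary Bruhat order on `W`: reflexive-transitive closure of right multiplication
by any reflection increasing length. -/
def bruhatLE {M : CoxeterMatrix B} (cs : CoxeterSystem M W) : W → W → Prop :=
  Relation.ReflTransGen
    (fun u w => ∃ t : W, cs.IsReflection t ∧ w = u * t ∧ cs.length u < cs.length w)

/-- `w` is a minimal-length representative of its coset `w * W_P`, i.e. `w ∈ W^P`. -/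
def isMinimalRep {M : CoxeterMatrix B} (cs : CoxeterSystem M W) (J : Set B) (w : W) : Prop :=
  ∀ v ∈ parabolicSubgroup cs J, cs.length w ≤ cs.length (w * v)

namespace ExtPAux

variable {B W : Type*} [Group W] {M : CoxeterMatrix B} (cs : CoxeterSystem M W)

local prefix:100 "σ" => cs.simple
local prefix:100 "π" => cs.wordProd
local prefix:100 "ℓ" => cs.length

lemma bruhatLE_step {u w : W} (t : W) (ht : cs.IsReflection t) (hw : w = u * t)
    (hl : ℓ u < ℓ w) : bruhatLE cs u w :=
  Relation.ReflTransGen.single ⟨t, ht, hw, hl⟩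

lemma bruhatLE_length_le {u w : W} (h : bruhatLE cs u w) : ℓ u ≤ ℓ w := by
  induction h with
  | refl => exact le_rfl
  | tail _ hstep ih => obtain ⟨t, _, _, hl⟩ := hstep; omega

lemma bruhatLE_eq_of_length_ge {u w : W} (h : bruhatLE cs u w) (hl : ℓ w ≤ ℓ u) : u = w := by
  cases h.cases_head with
  | inl h => exact h
  | inr h =>
      obtain ⟨v, hv, hrest⟩ := h
      obtain ⟨t, _, _, hlv⟩ := hv
      have := bruhatLE_length_le cs hrest
      omega

/-- Any word contains a reduced sublist with the same product. -/
lemma exists_reduced_sublist [Finite W] (ω : List B) :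
    ∃ ω', ω' <+ ω ∧ cs.IsReduced ω' ∧ π ω' = π ω := by
  induction ω using List.reverseRecOn with
  | nil => exact ⟨[], List.Sublist.refl _, by simp [CoxeterSystem.IsReduced], rfl⟩
  | append_singleton ω₂ i ih =>
      obtain ⟨ρ, hsub, hred, hprod⟩ := ih
      have hred' : ℓ (π ρ) = ρ.length := hred
      rcases cs.length_mul_simple (π ρ) i with hup | hdown
      · refine ⟨ρ ++ [i], hsub.append (List.Sublist.refl _), ?_, ?_⟩
        · show ℓ (π (ρ ++ [i])) = (ρ ++ [i]).length
          rw [cs.wordProd_append, cs.wordProd_singleton, hup, hred']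
          simp
        · simp [cs.wordProd_append, hprod]
      · have hlt : ℓ (π ρ * σ i) < ℓ (π ρ) := by omega
        obtain ⟨j, hj, heq⟩ := exchange_eraseIdx cs (cs.isReflection_simple i) hlt rfl
        have hlen := List.length_eraseIdx_add_one hj
        refine ⟨ρ.eraseIdx j, ?_, ?_, ?_⟩
        · exact ((ρ.eraseIdx_sublist j).trans hsub).trans (List.sublist_append_left ω₂ [i])
        · show ℓ (π (ρ.eraseIdx j)) = (ρ.eraseIdx j).length
          rw [← heq]
          omega
        · rw [← heq, cs.wordProd_append]
          simp [hprod]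

lemma exists_sublist_of_bruhatLE [Finite W] {u w : W} (h : bruhatLE cs u w) :
    ∀ ω : List B, cs.IsReduced ω → π ω = w → ∃ μ, μ <+ ω ∧ cs.IsReduced μ ∧ π μ = u := by
  induction h with
  | refl => exact fun ω hred hω => ⟨ω, List.Sublist.refl _, hred, hω⟩
  | @tail b c hsub hstep ih =>
      intro ω hred hω
      obtain ⟨t, ht, hc, hlc⟩ := hstep
      have hb : c * t = b := by rw [hc, mul_assoc, ht.mul_self, mul_one]
      have hlt : ℓ (c * t) < ℓ c := by rw [hb]; rw [hc] at hlc ⊢; exact hlc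
      obtain ⟨j, hj, heq⟩ := exchange_eraseIdx cs ht hlt hω
      obtain ⟨ρ, hρsub, hρred, hρprod⟩ := exists_reduced_sublist cs (ω.eraseIdx j)
      have hρb : π ρ = b := by rw [hρprod, ← heq, hb]
      obtain ⟨μ, hμsub, hμred, hμprod⟩ := ih ρ hρred hρb
      exact ⟨μ, (hμsub.trans hρsub).trans (ω.eraseIdx_sublist j), hμred, hμprod⟩

lemma reflection_eq_simple_of_cover [Finite W] {v t : W} (i : B)
    (hvs : ℓ (v * σ i) = ℓ v + 1) (ht : cs.IsReflection t) (hvt : ℓ (v * t) = ℓ v + 1)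
    (hvts : ℓ (v * t * σ i) < ℓ (v * t)) : t = σ i := by
  set z := v * t with hz
  obtain ⟨ρ, hρred, hρeq⟩ := cs.exists_reduced_word' (z * σ i)
  have hzs : ℓ (z * σ i) + 1 = ℓ z := by
    rcases cs.length_mul_simple z i with h | h
    · omega
    · exact h
  have hρlen : ρ.length = ℓ (z * σ i) := by
    have : ℓ (π ρ) = ρ.length := hρred
    rw [← hρeq] at this
    omega
  have hξ : π (ρ ++ [i]) = z := by
    rw [cs.wordProd_append, cs.wordProd_singleton, ← hρeq,
      cs.simple_mul_simple_cancel_right]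
  have hzt : ℓ (z * t) < ℓ z := by
    have : z * t = v := by rw [hz, mul_assoc, ht.mul_self, mul_one]
    rw [this]
    omega
  obtain ⟨j, hj, heq⟩ := exchange_eraseIdx cs ht hzt hξ
  have hvzt : z * t = v := by rw [hz, mul_assoc, ht.mul_self, mul_one]
  rw [List.length_append, List.length_singleton] at hj
  by_cases hjρ : j < ρ.length
  · exfalso
    rw [List.eraseIdx_append_of_lt_length hjρ] at heq
    have hvs' : v * σ i = π (ρ.eraseIdx j) := by
      rw [← hvzt, heq, cs.wordProd_append, cs.wordProd_singleton,
        cs.simple_mul_simple_cancel_right]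
    have hlb : ℓ (v * σ i) ≤ (ρ.eraseIdx j).length := by
      rw [hvs']; exact cs.length_wordProd_le _
    have := List.length_eraseIdx_add_one hjρ
    omega
  · have hjeq : j = ρ.length := by omega
    have herase : (ρ ++ [i]).eraseIdx j = ρ := by
      rw [hjeq, List.eraseIdx_append_of_length_le (le_refl ρ.length)]
      simp
    rw [herase, ← hρeq, hvzt] at heq
    have : t * σ i = 1 := by
      have := congrArg (fun x => v⁻¹ * x) heq
      simpa [hz, mul_assoc] using this.symm
    calc t = t * (σ i * σ i) := by rw [cs.simple_mul_simple_self, mul_one]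
      _ = (t * σ i) * σ i := by rw [mul_assoc]
      _ = σ i := by rw [this, one_mul]


/-- Deodhar-style one-step extension: a proper reduced sublist of a reduced word can be
grown to a reduced sublist one longer, moving up by a single reflection step. -/
lemma exists_cover_sublist [Finite W] :
    ∀ (ω : List B), cs.IsReduced ω → ∀ μ, μ <+ ω → cs.IsReduced μ → μ.length < ω.length →
    ∃ ν, ν <+ ω ∧ cs.IsReduced ν ∧ ν.length = μ.length + 1 ∧
      ∃ t, cs.IsReflection t ∧ π ν = π μ * t ∧ ℓ (π ν) = ℓ (π μ) + 1 := by
  intro ω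
  induction ω using List.reverseRecOn with
  | nil =>
      intro _ μ hsub _ hlen
      simp at hlen
  | append_singleton ω' i ih =>
      intro hred μ hsub hμred hlen
      have hω'red : cs.IsReduced ω' := by
        have := CoxeterSystem.IsReduced.take hred ω'.length
        rwa [List.take_left] at this
      have hω'len : ℓ (π ω') = ω'.length := hω'red
      have hωlen : ℓ (π (ω' ++ [i])) = ω'.length + 1 := by
        have : ℓ (π (ω' ++ [i])) = (ω' ++ [i]).length := hred
        simpa using this
      have hωprod : π (ω' ++ [i]) = π ω' * σ i := by
        rw [cs.wordProd_append, cs.wordProd_singleton]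
      obtain ⟨l₁, l₂, rfl, h₁, h₂⟩ := List.sublist_append_iff.mp hsub
      rcases List.sublist_singleton.mp h₂ with rfl | rfl
      · -- μ = l₁ (no use of the last letter)
        rw [List.append_nil] at *
        by_cases heq : l₁.length = ω'.length
        · have hμω : l₁ = ω' := h₁.eq_of_length heq
          subst hμω
          refine ⟨l₁ ++ [i], List.Sublist.refl _, hred, by simp, σ i,
            cs.isReflection_simple i, hωprod, ?_⟩
          omega
        · have hlt : l₁.length < ω'.length := lt_of_le_of_ne h₁.length_le heq
          obtain ⟨ν, hsub2, hred2, hlen2, t2, ht2, hprod2, hℓ2⟩ :=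
            ih hω'red l₁ h₁ hμred hlt
          exact ⟨ν, hsub2.trans (List.sublist_append_left ω' [i]), hred2, hlen2,
            t2, ht2, hprod2, hℓ2⟩
      · -- μ = l₁ ++ [i]
        have hμ'red : cs.IsReduced l₁ := by
          have := CoxeterSystem.IsReduced.take hμred l₁.length
          rwa [List.take_left] at this
        have hμ'len : ℓ (π l₁) = l₁.length := hμ'red
        have hμlen : ℓ (π (l₁ ++ [i])) = l₁.length + 1 := by
          have : ℓ (π (l₁ ++ [i])) = (l₁ ++ [i]).length := hμred
          simpa using this
        have hμprod : π (l₁ ++ [i]) = π l₁ * σ i := by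
          rw [cs.wordProd_append, cs.wordProd_singleton]
        have hcov : ℓ (π l₁ * σ i) = ℓ (π l₁) + 1 := by
          rw [← hμprod, hμlen, hμ'len]
        have hlt : l₁.length < ω'.length := by simpa using hlen
        obtain ⟨ν', hν'sub, hν'red, hν'len, t', ht', hprod', hℓ'⟩ :=
          ih hω'red l₁ h₁ hμ'red hlt
        have hν'ℓ : ℓ (π ν') = ν'.length := hν'red
        rcases cs.length_mul_simple (π ν') i with hup | hdown
        · refine ⟨ν' ++ [i], hν'sub.append (List.Sublist.refl _), ?_, by simp only [List.length_append, List.length_singleton, hν'len], ?_⟩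
          · show ℓ (π (ν' ++ [i])) = (ν' ++ [i]).length
            rw [cs.wordProd_append, cs.wordProd_singleton, hup]
            simp [hν'ℓ]
          · refine ⟨σ i * t' * σ i, ?_, ?_, ?_⟩
            · have := ht'.conj (σ i)
              rwa [cs.inv_simple] at this
            · rw [cs.wordProd_append, cs.wordProd_singleton, hprod', hμprod,
                mul_assoc (σ i) t' (σ i), ← mul_assoc (π l₁ * σ i) (σ i) (t' * σ i),
                cs.simple_mul_simple_cancel_right, ← mul_assoc]
            · rw [cs.wordProd_append, cs.wordProd_singleton, hup]
              omega
        · have hdlt : ℓ (π ν' * σ i) < ℓ (π ν') := by omega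
          have ht's : t' = σ i := by
            refine reflection_eq_simple_of_cover cs i hcov ht' ?_ ?_
            · rw [← hprod']; omega
            · rw [← hprod']; exact hdlt
          have hν'μ : π ν' = π (l₁ ++ [i]) := by
            rw [hprod', ht's, hμprod]
          by_cases hν'ω : ν'.length = ω'.length
          · have : ν' = ω' := hν'sub.eq_of_length hν'ω
            subst this
            refine ⟨ν' ++ [i], List.Sublist.refl _, hred, ?_, σ i,
              cs.isReflection_simple i, ?_, ?_⟩
            · simp only [List.length_append, List.length_singleton]
              omega
            · rw [hωprod, hν'μ]
            · rw [hωprod, hν'μ] at hωlen ⊢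
              omega
          · have hlt2 : ν'.length < ω'.length := lt_of_le_of_ne hν'sub.length_le hν'ω
            obtain ⟨ν, hsub2, hred2, hlen2, t2, ht2, hprod2, hℓ2⟩ :=
              ih hω'red ν' hν'sub hν'red hlt2
            refine ⟨ν, hsub2.trans (List.sublist_append_left ω' [i]), hred2, ?_,
              t2, ht2, ?_, ?_⟩
            · rw [hlen2, hν'len]
              simp
            · rw [hprod2, hν'μ]
            · rw [hℓ2, hν'μ]



lemma bruhatLE_of_sublist [Finite W] {ω μ : List B} (hω : cs.IsReduced ω)
    (hsub : μ <+ ω) (hμ : cs.IsReduced μ) : bruhatLE cs (π μ) (π ω) := by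
  have key : ∀ k : ℕ, ∀ μ, μ <+ ω → cs.IsReduced μ → ω.length - μ.length ≤ k →
      bruhatLE cs (π μ) (π ω) := by
    intro k
    induction k with
    | zero =>
        intro μ hsub hμ hk
        have hlen : μ.length = ω.length := by
          have := hsub.length_le
          omega
        obtain rfl := hsub.eq_of_length hlen
        exact Relation.ReflTransGen.refl
    | succ k ih =>
        intro μ hsub hμ hk
        by_cases he : μ.length = ω.length
        · obtain rfl := hsub.eq_of_length he
          exact Relation.ReflTransGen.refl
        · have hlt : μ.length < ω.length := lt_of_le_of_ne hsub.length_le he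
          obtain ⟨ν, hνsub, hνred, hνlen, t, ht, hprod, hℓ⟩ :=
            exists_cover_sublist cs ω hω μ hsub hμ hlt
          have h1 : bruhatLE cs (π μ) (π ν) :=
            bruhatLE_step cs t ht hprod (by omega)
          have h2 : bruhatLE cs (π ν) (π ω) := ih ν hνsub hνred (by omega)
          exact h1.trans h2
  exact key ω.length μ hsub hμ (by omega)

lemma lift_asc_asc [Finite W] {x y : W} (h : bruhatLE cs x y) (i : B)
    (hx : ℓ (x * σ i) = ℓ x + 1) (hy : ℓ (y * σ i) = ℓ y + 1) :
    bruhatLE cs (x * σ i) (y * σ i) := by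
  obtain ⟨ω, hred, hyeq⟩ := cs.exists_reduced_word' y
  obtain ⟨μ, hμsub, hμred, hμeq⟩ := exists_sublist_of_bruhatLE cs h ω hred hyeq.symm
  have hωred' : cs.IsReduced (ω ++ [i]) := by
    show ℓ (π (ω ++ [i])) = (ω ++ [i]).length
    have h1 : ℓ y = ω.length := by rw [hyeq]; exact hred
    rw [cs.wordProd_append, cs.wordProd_singleton, ← hyeq, hy]
    simp [h1]
  have hμred' : cs.IsReduced (μ ++ [i]) := by
    show ℓ (π (μ ++ [i])) = (μ ++ [i]).length
    have h1 : ℓ x = μ.length := by rw [← hμeq]; exact hμred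
    rw [cs.wordProd_append, cs.wordProd_singleton, hμeq, hx]
    simp [h1]
  have hble := bruhatLE_of_sublist cs hωred' (hμsub.append (List.Sublist.refl [i])) hμred'
  rwa [cs.wordProd_append, cs.wordProd_append, cs.wordProd_singleton, hμeq, ← hyeq] at hble

lemma lift_desc [Finite W] {x y : W} (h : bruhatLE cs x y) (i : B)
    (hy : ℓ (y * σ i) < ℓ y) (hx : ℓ (x * σ i) = ℓ x + 1) :
    bruhatLE cs (x * σ i) y := by
  obtain ⟨ρ, hρred, hρeq⟩ := cs.exists_reduced_word' (y * σ i)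
  have hρlen : ℓ (y * σ i) = ρ.length := by rw [hρeq]; exact hρred
  have hylen : ℓ y = ℓ (y * σ i) + 1 := by
    rcases cs.length_mul_simple y i with h1 | h1 <;> omega
  have hξeq : π (ρ ++ [i]) = y := by
    rw [cs.wordProd_append, cs.wordProd_singleton, ← hρeq,
      cs.simple_mul_simple_cancel_right]
  have hξred : cs.IsReduced (ρ ++ [i]) := by
    show ℓ (π (ρ ++ [i])) = (ρ ++ [i]).length
    rw [hξeq]
    simp [hylen, hρlen]
  obtain ⟨μ, hμsub, hμred, hμeq⟩ := exists_sublist_of_bruhatLE cs h (ρ ++ [i]) hξred hξeq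
  obtain ⟨l₁, l₂, rfl, h₁, h₂⟩ := List.sublist_append_iff.mp hμsub
  rcases List.sublist_singleton.mp h₂ with rfl | rfl
  · rw [List.append_nil] at hμred hμeq
    have hxlen : ℓ x = l₁.length := by rw [← hμeq]; exact hμred
    have hred' : cs.IsReduced (l₁ ++ [i]) := by
      show ℓ (π (l₁ ++ [i])) = (l₁ ++ [i]).length
      rw [cs.wordProd_append, cs.wordProd_singleton, hμeq, hx]
      simp [hxlen]
    have hble := bruhatLE_of_sublist cs hξred (h₁.append (List.Sublist.refl [i])) hred'
    rwa [hξeq, cs.wordProd_append, cs.wordProd_singleton, hμeq] at hble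
  · exfalso
    have hxσ : x * σ i = π l₁ := by
      rw [← hμeq, cs.wordProd_append, cs.wordProd_singleton,
        cs.simple_mul_simple_cancel_right]
    have h1 : ℓ (x * σ i) ≤ l₁.length := by
      rw [hxσ]; exact cs.length_wordProd_le l₁
    have h2 : ℓ x = l₁.length + 1 := by
      have : ℓ (π (l₁ ++ [i])) = (l₁ ++ [i]).length := hμred
      rw [hμeq] at this
      simpa using this
    omega

lemma lift_desc_desc [Finite W] {x y : W} (h : bruhatLE cs x y) (i : B)
    (hx : ℓ (x * σ i) < ℓ x) (hy : ℓ (y * σ i) < ℓ y) :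
    bruhatLE cs (x * σ i) (y * σ i) := by
  obtain ⟨ρ, hρred, hρeq⟩ := cs.exists_reduced_word' (y * σ i)
  have hρlen : ℓ (y * σ i) = ρ.length := by rw [hρeq]; exact hρred
  have hylen : ℓ y = ℓ (y * σ i) + 1 := by
    rcases cs.length_mul_simple y i with h1 | h1 <;> omega
  have hξeq : π (ρ ++ [i]) = y := by
    rw [cs.wordProd_append, cs.wordProd_singleton, ← hρeq,
      cs.simple_mul_simple_cancel_right]
  have hξred : cs.IsReduced (ρ ++ [i]) := by
    show ℓ (π (ρ ++ [i])) = (ρ ++ [i]).length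
    rw [hξeq]
    simp [hylen, hρlen]
  obtain ⟨μ, hμsub, hμred, hμeq⟩ := exists_sublist_of_bruhatLE cs h (ρ ++ [i]) hξred hξeq
  obtain ⟨l₁, l₂, rfl, h₁, h₂⟩ := List.sublist_append_iff.mp hμsub
  rcases List.sublist_singleton.mp h₂ with rfl | rfl
  · rw [List.append_nil] at hμred hμeq
    have h1 : bruhatLE cs x (y * σ i) := by
      rw [hρeq]
      rw [← hμeq]
      exact bruhatLE_of_sublist cs hρred h₁ hμred
    have h2 : bruhatLE cs (x * σ i) x :=
      bruhatLE_step cs (σ i) (cs.isReflection_simple i)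
        (cs.simple_mul_simple_cancel_right (w := x) i).symm hx
    exact h2.trans h1
  · have hxσ : x * σ i = π l₁ := by
      rw [← hμeq, cs.wordProd_append, cs.wordProd_singleton,
        cs.simple_mul_simple_cancel_right]
    have hl₁red : cs.IsReduced l₁ := by
      have := CoxeterSystem.IsReduced.take hμred l₁.length
      rwa [List.take_left] at this
    rw [hxσ, hρeq]
    exact bruhatLE_of_sublist cs hρred h₁ hl₁red


/-- Insertion lemma: if `u < w` then some right inversion of `w` takes `u` strictly up
while staying below `w`. -/
lemma insertion [Finite W] :
    ∀ (ω : List B), cs.IsReduced ω → ∀ u : W, bruhatLE cs u (π ω) → u ≠ π ω →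
    ∃ t, t ∈ cs.rightInvSeq ω ∧ ℓ u < ℓ (u * t) ∧ bruhatLE cs (u * t) (π ω) := by
  intro ω
  induction ω using List.reverseRecOn with
  | nil =>
      intro _ u hble hne
      exfalso
      apply hne
      have h0 : ℓ u ≤ ℓ (π ([] : List B)) := bruhatLE_length_le cs hble
      rw [cs.wordProd_nil] at h0 ⊢
      rw [cs.length_one] at h0
      exact cs.length_eq_zero_iff.mp (by omega)
  | append_singleton ω' i ih =>
      intro hred u hble hne
      have hω'red : cs.IsReduced ω' := by
        have := CoxeterSystem.IsReduced.take hred ω'.length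
        rwa [List.take_left] at this
      have hω'len : ℓ (π ω') = ω'.length := hω'red
      have hωlen : ℓ (π (ω' ++ [i])) = ω'.length + 1 := by
        have : ℓ (π (ω' ++ [i])) = (ω' ++ [i]).length := hred
        simpa using this
      have hωprod : π (ω' ++ [i]) = π ω' * σ i := by
        rw [cs.wordProd_append, cs.wordProd_singleton]
      have hwdesc : ℓ (π (ω' ++ [i]) * σ i) < ℓ (π (ω' ++ [i])) := by
        have h1 : π (ω' ++ [i]) * σ i = π ω' := by
          rw [hωprod, cs.simple_mul_simple_cancel_right]
        rw [h1]
        omega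
      have hrisconcat : cs.rightInvSeq (ω' ++ [i])
          = (List.map (MulAut.conj (σ i)) (cs.rightInvSeq ω')).concat (σ i) := by
        have := cs.rightInvSeq_concat ω' i
        rwa [List.concat_eq_append] at this
      rcases cs.length_mul_simple u i with hus | hus
      · refine ⟨σ i, ?_, by omega, ?_⟩
        · rw [hrisconcat, List.concat_eq_append, List.mem_append]
          right
          simp
        · exact lift_desc cs hble i hwdesc hus
      · have hus' : ℓ (u * σ i) < ℓ u := by omega
        have h1 : bruhatLE cs (u * σ i) (π ω') := by
          have := lift_desc_desc cs hble i hus' hwdesc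
          rwa [hωprod, cs.simple_mul_simple_cancel_right] at this
        have hne' : u * σ i ≠ π ω' := by
          intro hcon
          apply hne
          rw [hωprod, ← hcon, cs.simple_mul_simple_cancel_right]
        obtain ⟨t', hmem', hlt', hble'⟩ := ih hω'red (u * σ i) h1 hne'
        have ht'refl : cs.IsReflection t' := cs.isReflection_of_mem_rightInvSeq ω' hmem'
        have hinv' := cs.isRightInversion_of_mem_rightInvSeq hω'red hmem'
        set y := u * σ i * t' with hy
        have htrefl : cs.IsReflection (σ i * t' * σ i) := by
          have := ht'refl.conj (σ i)
          rwa [cs.inv_simple] at this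
        have hmem : σ i * t' * σ i ∈ cs.rightInvSeq (ω' ++ [i]) := by
          rw [hrisconcat, List.concat_eq_append, List.mem_append]
          left
          refine List.mem_map.mpr ⟨t', hmem', ?_⟩
          rw [MulAut.conj_apply, cs.inv_simple]
        have hut : u * (σ i * t' * σ i) = y * σ i := by
          rw [hy]
          group
        have hascω : ℓ (π ω' * σ i) = ℓ (π ω') + 1 := by
          rw [← hωprod, hωlen, hω'len]
        rcases cs.length_mul_simple y i with hys | hys
        · refine ⟨σ i * t' * σ i, hmem, ?_, ?_⟩
          · rw [hut]
            omega
          · have h2 := lift_asc_asc cs hble' i hys hascω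
            rw [← hωprod] at h2
            rw [hut]
            exact h2
        · have hys' : ℓ (y * σ i) < ℓ y := by omega
          have hyne : ℓ y ≠ ℓ u := by
            intro hcon
            have hstep : bruhatLE cs (u * σ i) y :=
              bruhatLE_step cs t' ht'refl hy hlt'
            have hasc : ℓ (u * σ i * σ i) = ℓ (u * σ i) + 1 := by
              rw [cs.simple_mul_simple_cancel_right]
              omega
            have huy := lift_desc cs hstep i hys' hasc
            rw [cs.simple_mul_simple_cancel_right] at huy
            have hueq : u = y := bruhatLE_eq_of_length_ge cs huy (by omega)
            have ht's : t' = σ i := by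
              rw [hy] at hueq
              calc t' = (u * σ i)⁻¹ * (u * σ i * t') := by group
                _ = (u * σ i)⁻¹ * u := by rw [← hueq]
                _ = σ i := by
                    rw [mul_inv_rev, cs.inv_simple, mul_assoc, inv_mul_cancel, mul_one]
            rw [ht's] at hinv'
            have := hinv'.2
            omega
          refine ⟨σ i * t' * σ i, hmem, ?_, ?_⟩
          · have hne2 := htrefl.length_mul_left_ne u
            rw [hut] at hne2 ⊢
            omega
          · rw [hut]
            have c1 : bruhatLE cs (y * σ i) y :=
              bruhatLE_step cs (σ i) (cs.isReflection_simple i)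
                (cs.simple_mul_simple_cancel_right (w := y) i).symm hys'
            have c2 : bruhatLE cs (π ω') (π (ω' ++ [i])) :=
              bruhatLE_step cs (σ i) (cs.isReflection_simple i) hωprod (by omega)
            exact (c1.trans hble').trans c2

end ExtPAux

theorem extPLE_iff_bruhatLE_of_minimalRep [Finite W] {M : CoxeterMatrix B}
    (cs : CoxeterSystem M W) (J : Set B) (w : W) (hw : isMinimalRep cs J w) (u : W) :
    extPLE cs J u w ↔ bruhatLE cs u w := by
  constructor
  · exact Relation.ReflTransGen.mono (r := extPStep cs J)
      (fun a b hab => by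
        obtain ⟨t, ht, _, hprod, hlen⟩ := hab
        exact ⟨t, ht, hprod, hlen⟩) u w
  · intro h
    obtain ⟨ω, hred, hweq⟩ := cs.exists_reduced_word' w
    suffices key : ∀ k : ℕ, ∀ u : W,
        cs.length w - cs.length u ≤ k → bruhatLE cs u w → extPLE cs J u w by
      exact key (cs.length w) u (by omega) h
    intro k
    induction k with
    | zero =>
        intro u hk hble
        have hle := ExtPAux.bruhatLE_length_le cs hble
        have heq : u = w := ExtPAux.bruhatLE_eq_of_length_ge cs hble (by omega)
        rw [heq]
        exact Relation.ReflTransGen.refl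
    | succ k ih =>
        intro u hk hble
        by_cases hne : u = w
        · rw [hne]
          exact Relation.ReflTransGen.refl
        · obtain ⟨t, hmem, hlt, hble'⟩ :=
            ExtPAux.insertion cs ω hred u (by rwa [← hweq]) (by rwa [← hweq])
          have htrefl := cs.isReflection_of_mem_rightInvSeq ω hmem
          have htinv := cs.isRightInversion_of_mem_rightInvSeq hred hmem
          have htP : t ∉ parabolicSubgroup cs J := by
            intro hP
            have h1 := hw t hP
            have h2 : cs.length (w * t) < cs.length w := by
              rw [hweq]
              exact htinv.2
            omega
          have hstep : extPStep cs J u (u * t) := ⟨t, htrefl, htP, rfl, hlt⟩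
          have h5 : cs.length u ≠ cs.length w := fun hc =>
            hne (ExtPAux.bruhatLE_eq_of_length_ge cs hble (le_of_eq hc.symm))
          have hle := ExtPAux.bruhatLE_length_le cs hble
          have h4 : cs.length (u * t) ≤ cs.length w := by
            have := ExtPAux.bruhatLE_length_le cs hble'
            rwa [← hweq] at this
          have h3 : extPLE cs J (u * t) w := by
            apply ih
            · omega
            · rwa [hweq]
          exact Relation.ReflTransGen.head hstep h3
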